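/- For complex numbers a1,b1,a2,b2,c1,d1,c2,d2 with c1,c2 nonzero, and nonnegative integers p1,p2,k: S_{a1,b1}^{a2,b2,p2}(p1,k) = c1^{-p1} c2^{-p2} Σ_{j1=0}^{p1} Σ_{j2=0}^{p2} C(p1,j1) C(p2,j2) a1^{j1} a2^{j2} (b1 c1 − a1 d1)^{p1−j1} (b2 c2 − a2 d2)^{p2−j2} S_{c1,d1}^{c2,d2,j2}(j1,k). -/

import Mathlib

open Finset

/-- Stirling numbers of the second kind. -/
def stirling2 : ℕ → ℕ → ℕ
  | 0, 0 => 1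
  | 0, _ + 1 => 0
  | _ + 1, 0 => 0
  | p + 1, k + 1 => stirling2 p k + (k + 1) * stirling2 p (k + 1)

/-- Unsigned Stirling numbers of the first kind. -/
def stirling1 : ℕ → ℕ → ℕ
  | 0, 0 => 1
  | 0, _ + 1 => 0
  | _ + 1, 0 => 0
  | p + 1, k + 1 => stirling1 p k + p * stirling1 p (k + 1)

/-- Stirling numbers of the second kind with integer second argument (0 when negative). -/
def stirling2Z (p : ℕ) (k : ℤ) : ℤ :=
  if k < 0 then 0 else stirling2 p k.toNat

/-- Generalized Stirling number of the second kind
`S_{a1,b1}^{a2,b2,p2}(p1,k)`. -/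
noncomputable def gsn (a1 b1 a2 b2 : ℂ) (p1 p2 k : ℕ) : ℂ :=
  (1 / (k.factorial : ℂ)) * ∑ j ∈ range (k + 1),
    (-1) ^ j * (k.choose j : ℂ) * (a1 * ((k : ℂ) - j) + b1) ^ p1 *
      (a2 * ((k : ℂ) - j) + b2) ^ p2

/-- Generalized Stirling number with integer index (0 when negative). -/
noncomputable def gsnZ (a1 b1 a2 b2 : ℂ) (p1 p2 : ℕ) (k : ℤ) : ℂ :=
  if k < 0 then 0 else gsn a1 b1 a2 b2 p1 p2 k.toNat

lemma key_affine_pow (a b c d : ℂ) (hc : c ≠ 0) (p : ℕ) (x : ℂ) :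
    (a * x + b) ^ p =
      ∑ j ∈ range (p + 1),
        (p.choose j : ℂ) * a ^ j * (b * c - a * d) ^ (p - j) * (c * x + d) ^ j * c⁻¹ ^ p := by
  have h : a * x + b = c⁻¹ * (a * (c * x + d) + (b * c - a * d)) := by
    field_simp; ring
  rw [h, mul_pow, add_pow, Finset.mul_sum]
  refine Finset.sum_congr rfl fun j _ => ?_
  rw [mul_pow]
  ring

theorem stmt4 (a1 b1 a2 b2 c1 d1 c2 d2 : ℂ) (hc1 : c1 ≠ 0) (hc2 : c2 ≠ 0)
    (p1 p2 k : ℕ) :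
    gsn a1 b1 a2 b2 p1 p2 k =
      c1⁻¹ ^ p1 * c2⁻¹ ^ p2 * ∑ j1 ∈ range (p1 + 1), ∑ j2 ∈ range (p2 + 1),
        (p1.choose j1 : ℂ) * (p2.choose j2 : ℂ) * a1 ^ j1 * a2 ^ j2 *
          (b1 * c1 - a1 * d1) ^ (p1 - j1) * (b2 * c2 - a2 * d2) ^ (p2 - j2) *
          gsn c1 d1 c2 d2 j1 j2 k := by
  simp only [gsn]
  simp only [key_affine_pow a1 b1 c1 d1 hc1 p1, key_affine_pow a2 b2 c2 d2 hc2 p2]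
  simp only [Finset.mul_sum, Finset.sum_mul, Finset.sum_mul_sum]
  conv_rhs => enter [2,x]; rw [Finset.sum_comm]
  conv_rhs => rw [Finset.sum_comm]
  conv_lhs => enter [2,x]; rw [Finset.sum_comm]
  refine Finset.sum_congr rfl fun j _ => Finset.sum_congr rfl fun j1 _ =>
    Finset.sum_congr rfl fun j2 _ => ?_
  ring
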